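/- arXiv:2011.02545 — 2 statements merged into one kernel-verified Lean document; each statement's English description precedes it below -/
import Mathlib

section
/- Let U, W be bounded operators on a separable Hilbert space H with W invertible and U unitary. Suppose that for each m ∈ ℕ there exist a strictly increasing sequence {n_k} ⊆ ℕ and sequences {D_k}, {G_k} of compact operators such that ‖D_k − P_m‖ → 0, ‖G_k − P_m‖ → 0, ‖W^{n_k} G_k‖ → 0, and ‖W^{−n_k} D_k‖ → 0 as k → ∞, where P_m is the orthogonal projection onto span{e_1,…,e_m}. Then the operator T_{U,W} : F ↦ W F U is topologically transitive on the space of compact operators B_0(H) with the operator norm: for any two nonempty open sets O_1, O_2 ⊆ B_0(H), there exists n ∈ ℕ with T_{U,W}^n(O_1) ∩ O_2 ≠ ∅. -/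
set_option linter.unusedSectionVars false
set_option linter.unusedVariables false

open scoped InnerProductSpace
open Filter

noncomputable section

variable {H : Type*} [NormedAddCommGroup H] [InnerProductSpace ℂ H] [CompleteSpace H]

/-- `m(F) := inf_{‖x‖=1} ‖F x‖`. -/
def mop (F : H →L[ℂ] H) : ℝ := ⨅ x : {x : H // ‖x‖ = 1}, ‖F x‖

/-- The orthogonal projection onto a finite-dimensional subspace, as an endomorphism of `H`. -/
def projCLM (K : Submodule ℂ H) (hK : FiniteDimensional ℂ K) : H →L[ℂ] H :=
  letI := hK
  letI : CompleteSpace K := FiniteDimensional.complete ℂ K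
  K.subtypeL ∘L K.orthogonalProjectionOnto

/-- `L_m`, the span of the first `m` basis vectors. -/
def Lspan (b : HilbertBasis ℕ ℂ H) (m : ℕ) : Submodule ℂ H :=
  Submodule.span ℂ (b '' Set.Iio m)

theorem Lspan_fd (b : HilbertBasis ℕ ℂ H) (m : ℕ) : FiniteDimensional ℂ (Lspan b m) :=
  FiniteDimensional.span_of_finite ℂ ((Set.finite_Iio m).image b)

/-- `P_m`, the orthogonal projection onto `L_m`. -/
def Pproj (b : HilbertBasis ℕ ℂ H) (m : ℕ) : H →L[ℂ] H := projCLM (Lspan b m) (Lspan_fd b m)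

/-- `T_{U,W}^n (F) = W^n F U^n`. -/
def Tpow (W : H ≃L[ℂ] H) (U : H →L[ℂ] H) (n : ℕ) (F : H →L[ℂ] H) : H →L[ℂ] H :=
  ((W : H →L[ℂ] H) ^ n) ∘L F ∘L (U ^ n)

/-- `S_{U,W}^n (F) = W^{-n} F U^{-n}` (here `U⁻¹ = star U` since `U` is unitary). -/
def Spow (W : H ≃L[ℂ] H) (U : H →L[ℂ] H) (n : ℕ) (F : H →L[ℂ] H) : H →L[ℂ] H :=
  ((W.symm : H →L[ℂ] H) ^ n) ∘L F ∘L ((star U) ^ n)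

/-- The cosine operator function `C^{(n)} = (1/2)(T^n + S^n)`. -/
def Cpow (W : H ≃L[ℂ] H) (U : H →L[ℂ] H) (n : ℕ) (F : H →L[ℂ] H) : H →L[ℂ] H :=
  (2 : ℂ)⁻¹ • (Tpow W U n F + Spow W U n F)

/-- `B₀(H)`, the compact operators on `H`, as a submodule of `B(H)`. -/
def B0 : Submodule ℂ (H →L[ℂ] H) := compactOperator (RingHom.id ℂ) H H

theorem Tpow_mem (W : H ≃L[ℂ] H) (U : H →L[ℂ] H) (n : ℕ) (F : H →L[ℂ] H)
    (hF : IsCompactOperator F) : Tpow W U n F ∈ B0 (H := H) :=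
  (hF.comp_clm (U ^ n)).clm_comp ((W : H →L[ℂ] H) ^ n)

theorem Spow_mem (W : H ≃L[ℂ] H) (U : H →L[ℂ] H) (n : ℕ) (F : H →L[ℂ] H)
    (hF : IsCompactOperator F) : Spow W U n F ∈ B0 (H := H) :=
  (hF.comp_clm ((star U) ^ n)).clm_comp ((W.symm : H →L[ℂ] H) ^ n)

theorem Cpow_mem (W : H ≃L[ℂ] H) (U : H →L[ℂ] H) (n : ℕ) (F : H →L[ℂ] H)
    (hF : IsCompactOperator F) : Cpow W U n F ∈ B0 (H := H) :=
  Submodule.smul_mem _ _ (Submodule.add_mem _ (Tpow_mem W U n F hF) (Spow_mem W U n F hF))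

/-- `T^n` as a map of `B₀(H)`. -/
def TB0 (W : H ≃L[ℂ] H) (U : H →L[ℂ] H) (n : ℕ) (F : B0 (H := H)) : B0 (H := H) :=
  ⟨Tpow W U n F.1, Tpow_mem W U n F.1 F.2⟩

/-- `C^{(n)}` as a map of `B₀(H)`. -/
def CB0 (W : H ≃L[ℂ] H) (U : H →L[ℂ] H) (n : ℕ) (F : B0 (H := H)) : B0 (H := H) :=
  ⟨Cpow W U n F.1, Cpow_mem W U n F.1 F.2⟩

/-- The absolute value `|G| = sqrt(G* G)` of an operator. -/
def absop (G : H →L[ℂ] H) : H →L[ℂ] H := CFC.sqrt (star G * G)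

/-- The trace computed in the orthonormal basis `b`. -/
def trB (b : HilbertBasis ℕ ℂ H) (A : H →L[ℂ] H) : ℂ := ∑' j, ⟪b j, A (b j)⟫_ℂ

/-- `G` is trace class (w.r.t. the basis `b`): the trace of `|G|` converges. -/
def IsTraceClassB (b : HilbertBasis ℕ ℂ H) (G : H →L[ℂ] H) : Prop :=
  Summable fun j => ⟪b j, absop G (b j)⟫_ℂ

/-- The trace norm `‖G‖₁ = tr |G|` computed in the basis `b`. -/
def traceNormB (b : HilbertBasis ℕ ℂ H) (G : H →L[ℂ] H) : ℝ :=
  ∑' j, (⟪b j, absop G (b j)⟫_ℂ).re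

/-- `L_n` for a basis indexed by positive integers. -/
def LspanP (b : HilbertBasis ℕ+ ℂ H) (n : ℕ) : Submodule ℂ H :=
  Submodule.span ℂ (b '' {j : ℕ+ | (j : ℕ) ≤ n})

theorem LspanP_fd (b : HilbertBasis ℕ+ ℂ H) (n : ℕ) : FiniteDimensional ℂ (LspanP b n) := by
  refine FiniteDimensional.span_of_finite ℂ (Set.Finite.image b ?_)
  have : {j : ℕ+ | (j : ℕ) ≤ n} = ((↑) : ℕ+ → ℕ) ⁻¹' Set.Iic n := rfl
  rw [this]
  exact (Set.finite_Iic n).preimage (Set.injOn_of_injective PNat.coe_injective)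

/-- `P_n` for a basis indexed by positive integers. -/
def PprojP (b : HilbertBasis ℕ+ ℂ H) (n : ℕ) : H →L[ℂ] H := projCLM (LspanP b n) (LspanP_fd b n)



/-! ### Auxiliary lemmas -/

lemma projCLM_norm_le' (K : Submodule ℂ H) (hK : FiniteDimensional ℂ K) (x : H) :
    ‖projCLM K hK x‖ ≤ ‖x‖ := by
  letI := hK
  letI : CompleteSpace K := FiniteDimensional.complete ℂ K
  show ‖(K.orthogonalProjectionOnto x : H)‖ ≤ ‖x‖
  calc ‖(K.orthogonalProjectionOnto x : H)‖ = ‖K.orthogonalProjectionOnto x‖ := rfl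
    _ ≤ ‖K.orthogonalProjectionOnto‖ * ‖x‖ := (K.orthogonalProjectionOnto).le_opNorm x
    _ ≤ 1 * ‖x‖ := by
        nlinarith [K.orthogonalProjectionOnto_norm_le, norm_nonneg x,
          (K.orthogonalProjectionOnto).le_opNorm x, norm_nonneg (K.orthogonalProjectionOnto x)]
    _ = ‖x‖ := one_mul _

lemma projCLM_idem (K : Submodule ℂ H) (hK : FiniteDimensional ℂ K) (x : H) :
    projCLM K hK (projCLM K hK x) = projCLM K hK x := by
  letI := hK
  letI : CompleteSpace K := FiniteDimensional.complete ℂ K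
  show (K.orthogonalProjectionOnto ((K.orthogonalProjectionOnto x : H)) : H) = _
  rw [Submodule.orthogonalProjectionOnto_mem_subspace_eq_self]
  rfl

lemma projCLM_min (K : Submodule ℂ H) (hK : FiniteDimensional ℂ K) (x : H) {z : H}
    (hz : z ∈ K) : ‖x - projCLM K hK x‖ ≤ ‖x - z‖ := by
  letI := hK
  letI : CompleteSpace K := FiniteDimensional.complete ℂ K
  have h := Submodule.starProjection_minimal (U := K) x
  show ‖x - K.starProjection x‖ ≤ _
  rw [h]
  exact ciInf_le ⟨0, fun r ⟨v, hv⟩ => hv ▸ norm_nonneg _⟩ (⟨z, hz⟩ : K)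

lemma Pproj_tendsto (b : HilbertBasis ℕ ℂ H) (y : H) :
    Tendsto (fun m => ‖y - Pproj b m y‖) atTop (nhds 0) := by
  have hsum : Tendsto (fun m => ∑ j ∈ Finset.range m, b.repr y j • b j) atTop (nhds y) :=
    (b.hasSum_repr y).tendsto_sum_nat
  have hg : Tendsto (fun m => ‖y - ∑ j ∈ Finset.range m, b.repr y j • b j‖) atTop (nhds 0) := by
    have := (tendsto_const_nhds (x := y) (f := atTop (α := ℕ))).sub hsum
    rw [sub_self] at this
    simpa using this.norm
  refine squeeze_zero (fun m => norm_nonneg _) (fun m => ?_) hg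
  refine projCLM_min _ _ _ ?_
  refine Submodule.sum_mem _ fun j hj => Submodule.smul_mem _ _ ?_
  exact Submodule.subset_span ⟨j, Finset.mem_range.1 hj, rfl⟩

lemma compact_approx (b : HilbertBasis ℕ ℂ H) (A : H →L[ℂ] H) (hA : IsCompactOperator A) :
    Tendsto (fun m => ‖A - (Pproj b m) ∘L A‖) atTop (nhds 0) := by
  rw [Metric.tendsto_atTop]
  intro ε hε
  have hA' : IsCompactOperator (A : H →ₗ[ℂ] H) := hA
  have hS : IsCompact (closure (A '' Metric.closedBall 0 1)) := by
    simpa using hA'.isCompact_closure_image_closedBall (𝕜₁ := ℂ) 1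
  obtain ⟨t, ht_fin, ht_cov⟩ := (Metric.totallyBounded_iff.1 hS.totallyBounded) (ε/4) (by linarith)
  have hev : ∀ᶠ m in atTop, ∀ y ∈ t, ‖y - Pproj b m y‖ < ε/4 := by
    rw [eventually_all_finite ht_fin]
    intro y hy
    exact (Pproj_tendsto b y).eventually (gt_mem_nhds (by linarith))
  obtain ⟨N, hN⟩ := hev.exists_forall_of_atTop
  refine ⟨N, fun m hm => ?_⟩
  rw [Real.dist_eq, sub_zero, abs_of_nonneg (norm_nonneg _)]
  have key : ∀ u : H, ‖u‖ ≤ 1 → ‖A u - Pproj b m (A u)‖ ≤ 3*ε/4 := by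
    intro u hu
    have hmem : A u ∈ closure (A '' Metric.closedBall 0 1) :=
      subset_closure ⟨u, by simpa [Metric.mem_closedBall, dist_eq_norm] using hu, rfl⟩
    obtain ⟨y, hy, hball⟩ := Set.mem_iUnion₂.1 (ht_cov hmem)
    rw [Metric.mem_ball, dist_eq_norm] at hball
    have h1 : ‖y - Pproj b m y‖ < ε/4 := hN m hm y hy
    have h2 : ‖Pproj b m y - Pproj b m (A u)‖ ≤ ‖y - A u‖ := by
      rw [← map_sub]; exact projCLM_norm_le' _ _ _
    calc ‖A u - Pproj b m (A u)‖
        = ‖(A u - y) + (y - Pproj b m y) + (Pproj b m y - Pproj b m (A u))‖ := by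
          congr 1; abel
      _ ≤ ‖(A u - y) + (y - Pproj b m y)‖ + ‖Pproj b m y - Pproj b m (A u)‖ := norm_add_le _ _
      _ ≤ ‖A u - y‖ + ‖y - Pproj b m y‖ + ‖Pproj b m y - Pproj b m (A u)‖ := by
          linarith [norm_add_le (A u - y) (y - Pproj b m y)]
      _ ≤ ‖A u - y‖ + ‖y - Pproj b m y‖ + ‖y - A u‖ := by linarith
      _ ≤ ε/4 + ε/4 + ε/4 := by
          rw [norm_sub_rev (y) (A u)] at *
          linarith [hball]
      _ = 3*ε/4 := by ring
  have hop : ‖A - (Pproj b m) ∘L A‖ ≤ 3*ε/4 := by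
    refine ContinuousLinearMap.opNorm_le_bound _ (by linarith) fun x => ?_
    rcases eq_or_ne x 0 with rfl | hx
    · simp
    · have hxn : (0:ℝ) < ‖x‖ := norm_pos_iff.2 hx
      set u := ‖x‖⁻¹ • x with hu
      have hun : ‖u‖ = 1 := by
        rw [hu, norm_smul, norm_inv, norm_norm, inv_mul_cancel₀ hxn.ne']
      have hx' : x = ‖x‖ • u := by
        rw [hu, smul_smul, mul_inv_cancel₀ hxn.ne', one_smul]
      have := key u hun.le
      calc ‖(A - (Pproj b m) ∘L A) x‖ = ‖(A - (Pproj b m) ∘L A) (‖x‖ • u)‖ := by rw [← hx']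
        _ = ‖x‖ * ‖(A - (Pproj b m) ∘L A) u‖ := by
            rw [ContinuousLinearMap.map_smul_of_tower, norm_smul, norm_norm]
        _ = ‖x‖ * ‖A u - Pproj b m (A u)‖ := by
            simp [ContinuousLinearMap.sub_apply]
        _ ≤ ‖x‖ * (3*ε/4) := by nlinarith
        _ = 3*ε/4 * ‖x‖ := by ring
  linarith

lemma mul_lt_third {a c eps : ℝ} (heps : 0 < eps) (hc : 0 ≤ c) (ha : 0 ≤ a)
    (h : a < eps/(3*(c+1))) : a * c < eps/3 := by
  have h1 : a * c ≤ a * (c+1) := by nlinarith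
  have h2 : a * (c+1) < eps/(3*(c+1)) * (c+1) :=
    mul_lt_mul_of_pos_right h (by linarith)
  have h3 : eps/(3*(c+1)) * (c+1) = eps/3 := by
    field_simp
  linarith

lemma norm_comp_right_le (F V : H →L[ℂ] H) (hV : ∀ x, ‖V x‖ = ‖x‖) : ‖F ∘L V‖ ≤ ‖F‖ :=
  ContinuousLinearMap.opNorm_le_bound _ (norm_nonneg F) fun x => by
    rw [ContinuousLinearMap.comp_apply]
    calc ‖F (V x)‖ ≤ ‖F‖ * ‖V x‖ := F.le_opNorm _
      _ = ‖F‖ * ‖x‖ := by rw [hV]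

lemma Tpow_add (W : H ≃L[ℂ] H) (U : H →L[ℂ] H) (n : ℕ) (F G : H →L[ℂ] H) :
    Tpow W U n (F + G) = Tpow W U n F + Tpow W U n G := by
  simp [Tpow, ContinuousLinearMap.add_comp, ContinuousLinearMap.comp_add]

lemma Tpow_Spow (W : H ≃L[ℂ] H) (U : H →L[ℂ] H) (hU : U ∈ unitary (H →L[ℂ] H)) (n : ℕ)
    (X : H →L[ℂ] H) : Tpow W U n (Spow W U n X) = X := by
  have hab : (W : H →L[ℂ] H) * (W.symm : H →L[ℂ] H) = 1 := by
    rw [ContinuousLinearMap.mul_def, ContinuousLinearEquiv.coe_comp_coe_symm]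
    rfl
  have hba : (W.symm : H →L[ℂ] H) * (W : H →L[ℂ] H) = 1 := by
    rw [ContinuousLinearMap.mul_def, ContinuousLinearEquiv.coe_symm_comp_coe]
    rfl
  have hcomm : Commute ((W : H →L[ℂ] H)) ((W.symm : H →L[ℂ] H)) := by
    unfold Commute SemiconjBy
    rw [hab, hba]
  have hW : ((W : H →L[ℂ] H) ^ n) * ((W.symm : H →L[ℂ] H) ^ n) = 1 := by
    rw [← hcomm.mul_pow, hab, one_pow]
  have hU2 : ((star U) ^ n) * (U ^ n) = 1 := by
    rw [← star_pow]
    exact Unitary.star_mul_self_of_mem (pow_mem hU n)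
  show ((W : H →L[ℂ] H) ^ n) ∘L (((W.symm : H →L[ℂ] H) ^ n) ∘L X ∘L ((star U) ^ n)) ∘L (U ^ n)
      = X
  have : ∀ f g : H →L[ℂ] H, f ∘L g = f * g := fun f g => rfl
  rw [this, this, this, this]
  calc ((W : H →L[ℂ] H) ^ n) * (((W.symm : H →L[ℂ] H) ^ n) * (X * ((star U) ^ n))) * (U ^ n)
      = (((W : H →L[ℂ] H) ^ n) * ((W.symm : H →L[ℂ] H) ^ n)) * (X * (((star U) ^ n) * (U ^ n)))
        := by rw [mul_assoc, mul_assoc, mul_assoc, mul_assoc]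
    _ = X := by rw [hW, hU2, mul_one, one_mul]

lemma B0_dist (F G : ↥(B0 (H := H))) : dist F G = ‖F.1 - G.1‖ := by
  rw [dist_eq_norm]; rfl


/-- sufficient condition for topological transitivity of `T_{U,W}` on `B₀(H)`. -/
theorem stmt10 (b : HilbertBasis ℕ ℂ H) (W : H ≃L[ℂ] H) (U : H →L[ℂ] H)
    (hU : U ∈ unitary (H →L[ℂ] H))
    (hyp : ∀ m : ℕ, ∃ n : ℕ → ℕ, StrictMono n ∧
      ∃ D G : ℕ → H →L[ℂ] H,
        (∀ k, IsCompactOperator (D k)) ∧ (∀ k, IsCompactOperator (G k)) ∧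
        Filter.Tendsto (fun k => ‖D k - Pproj b m‖) atTop (nhds 0) ∧
        Filter.Tendsto (fun k => ‖G k - Pproj b m‖) atTop (nhds 0) ∧
        Filter.Tendsto (fun k => ‖((W : H →L[ℂ] H) ^ n k) ∘L G k‖) atTop (nhds 0) ∧
        Filter.Tendsto (fun k => ‖((W.symm : H →L[ℂ] H) ^ n k) ∘L D k‖) atTop (nhds 0)) :
    ∀ O₁ O₂ : Set ↥(B0 (H := H)), IsOpen O₁ → IsOpen O₂ → O₁.Nonempty → O₂.Nonempty →
      ∃ n : ℕ, 0 < n ∧ ∃ F ∈ O₁, TB0 W U n F ∈ O₂ := by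
  intro O₁ O₂ hO₁ hO₂ hne₁ hne₂
  obtain ⟨A, hA⟩ := hne₁
  obtain ⟨B, hB⟩ := hne₂
  obtain ⟨ε₁, hε₁, hball₁⟩ := Metric.isOpen_iff.1 hO₁ A hA
  obtain ⟨ε₂, hε₂, hball₂⟩ := Metric.isOpen_iff.1 hO₂ B hB
  set ε := min ε₁ ε₂ with hεdef
  have hεpos : 0 < ε := lt_min hε₁ hε₂
  have h1 := (compact_approx b A.1 A.2).eventually (gt_mem_nhds (show (0:ℝ) < ε/3 by linarith))
  have h2 := (compact_approx b B.1 B.2).eventually (gt_mem_nhds (show (0:ℝ) < ε/3 by linarith))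
  obtain ⟨m, hmA, hmB⟩ := (h1.and h2).exists
  obtain ⟨n, hnmono, D, G, hDc, hGc, hDP, hGP, hWG, hWD⟩ := hyp m
  set P := Pproj b m with hPdef
  set A' := P ∘L A.1 with hA'def
  set B' := P ∘L B.1 with hB'def
  have hδA : (0:ℝ) < ε/(3*(‖A'‖+1)) := by positivity
  have hδB : (0:ℝ) < ε/(3*(‖B'‖+1)) := by positivity
  have e1 := hGP.eventually (gt_mem_nhds hδA)
  have e2 := hDP.eventually (gt_mem_nhds hδB)
  have e3 := hWG.eventually (gt_mem_nhds hδA)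
  have e4 := hWD.eventually (gt_mem_nhds hδB)
  obtain ⟨k, ⟨⟨⟨hk1, hk2⟩, hk3⟩, hk4⟩, hk5⟩ :=
    ((((e1.and e2).and e3).and e4).and (eventually_ge_atTop 1)).exists
  have hnk : 0 < n k := lt_of_lt_of_le Nat.one_pos (le_trans hk5 hnmono.le_apply)
  have hUn : ∀ x : H, ‖(U ^ (n k)) x‖ = ‖x‖ := fun x =>
    ContinuousLinearMap.norm_map_of_mem_unitary (pow_mem hU (n k)) x
  have hsUn : ∀ x : H, ‖((star U) ^ (n k)) x‖ = ‖x‖ := fun x =>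
    ContinuousLinearMap.norm_map_of_mem_unitary (pow_mem (Unitary.star_mem hU) (n k)) x
  have hPA' : P ∘L A' = A' := by
    ext x
    simp only [hA'def, ContinuousLinearMap.comp_apply]
    exact projCLM_idem _ _ _
  have hPB' : P ∘L B' = B' := by
    ext x
    simp only [hB'def, ContinuousLinearMap.comp_apply]
    exact projCLM_idem _ _ _
  set F₀ := G k ∘L A' + Spow W U (n k) (D k ∘L B') with hF₀def
  have hF₀mem : F₀ ∈ B0 (H := H) :=
    Submodule.add_mem _ ((hGc k).comp_clm A')
      (Spow_mem W U (n k) _ ((hDc k).comp_clm B'))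
  -- estimates for the first open set
  have estGA : ‖G k ∘L A' - A'‖ < ε/3 := by
    have hrw : G k ∘L A' - A' = (G k - P) ∘L A' := by
      rw [ContinuousLinearMap.sub_comp, hPA']
    rw [hrw]
    calc ‖(G k - P) ∘L A'‖ ≤ ‖G k - P‖ * ‖A'‖ := ContinuousLinearMap.opNorm_comp_le _ _
      _ < ε/3 := mul_lt_third hεpos (norm_nonneg _) (norm_nonneg _) hk1
  have estA' : ‖A' - A.1‖ < ε/3 := by
    rw [norm_sub_rev]; exact hmA
  have estS : ‖Spow W U (n k) (D k ∘L B')‖ < ε/3 := by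
    have hrw : Spow W U (n k) (D k ∘L B')
        = ((((W.symm : H →L[ℂ] H) ^ (n k)) ∘L D k) ∘L B') ∘L ((star U) ^ (n k)) := by
      ext x; rfl
    rw [hrw]
    calc ‖((((W.symm : H →L[ℂ] H) ^ (n k)) ∘L D k) ∘L B') ∘L ((star U) ^ (n k))‖
        ≤ ‖(((W.symm : H →L[ℂ] H) ^ (n k)) ∘L D k) ∘L B'‖ := norm_comp_right_le _ _ hsUn
      _ ≤ ‖((W.symm : H →L[ℂ] H) ^ (n k)) ∘L D k‖ * ‖B'‖ :=
          ContinuousLinearMap.opNorm_comp_le _ _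
      _ < ε/3 := mul_lt_third hεpos (norm_nonneg _) (norm_nonneg _) hk4
  have hdist₁ : ‖F₀ - A.1‖ < ε := by
    calc ‖F₀ - A.1‖
        = ‖(G k ∘L A' - A.1) + Spow W U (n k) (D k ∘L B')‖ := by
          rw [hF₀def, add_sub_right_comm]
      _ ≤ ‖G k ∘L A' - A.1‖ + ‖Spow W U (n k) (D k ∘L B')‖ := norm_add_le _ _
      _ ≤ (‖G k ∘L A' - A'‖ + ‖A' - A.1‖) + ‖Spow W U (n k) (D k ∘L B')‖ := by
          have := norm_sub_le_norm_sub_add_norm_sub (G k ∘L A') A' A.1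
          linarith
      _ < ε/3 + ε/3 + ε/3 := by linarith
      _ = ε := by ring
  -- estimates for the second open set
  have estT : ‖Tpow W U (n k) (G k ∘L A')‖ < ε/3 := by
    have hrw : Tpow W U (n k) (G k ∘L A')
        = ((((W : H →L[ℂ] H) ^ (n k)) ∘L G k) ∘L A') ∘L (U ^ (n k)) := by
      ext x; rfl
    rw [hrw]
    calc ‖((((W : H →L[ℂ] H) ^ (n k)) ∘L G k) ∘L A') ∘L (U ^ (n k))‖
        ≤ ‖(((W : H →L[ℂ] H) ^ (n k)) ∘L G k) ∘L A'‖ := norm_comp_right_le _ _ hUn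
      _ ≤ ‖((W : H →L[ℂ] H) ^ (n k)) ∘L G k‖ * ‖A'‖ :=
          ContinuousLinearMap.opNorm_comp_le _ _
      _ < ε/3 := mul_lt_third hεpos (norm_nonneg _) (norm_nonneg _) hk3
  have estDB : ‖D k ∘L B' - B'‖ < ε/3 := by
    have hrw : D k ∘L B' - B' = (D k - P) ∘L B' := by
      rw [ContinuousLinearMap.sub_comp, hPB']
    rw [hrw]
    calc ‖(D k - P) ∘L B'‖ ≤ ‖D k - P‖ * ‖B'‖ := ContinuousLinearMap.opNorm_comp_le _ _
      _ < ε/3 := mul_lt_third hεpos (norm_nonneg _) (norm_nonneg _) hk2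
  have estB' : ‖B' - B.1‖ < ε/3 := by
    rw [norm_sub_rev]; exact hmB
  have hTval : Tpow W U (n k) F₀ = Tpow W U (n k) (G k ∘L A') + D k ∘L B' := by
    rw [hF₀def, Tpow_add, Tpow_Spow W U hU]
  have hdist₂ : ‖Tpow W U (n k) F₀ - B.1‖ < ε := by
    calc ‖Tpow W U (n k) F₀ - B.1‖
        = ‖Tpow W U (n k) (G k ∘L A') + (D k ∘L B' - B.1)‖ := by
          rw [hTval, add_sub_assoc]
      _ ≤ ‖Tpow W U (n k) (G k ∘L A')‖ + ‖D k ∘L B' - B.1‖ := norm_add_le _ _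
      _ ≤ ‖Tpow W U (n k) (G k ∘L A')‖ + (‖D k ∘L B' - B'‖ + ‖B' - B.1‖) := by
          have := norm_sub_le_norm_sub_add_norm_sub (D k ∘L B') B' B.1
          linarith
      _ < ε/3 + (ε/3 + ε/3) := by linarith
      _ = ε := by ring
  refine ⟨n k, hnk, ⟨F₀, hF₀mem⟩, ?_, ?_⟩
  · apply hball₁
    rw [Metric.mem_ball, B0_dist]
    exact lt_of_lt_of_le hdist₁ (min_le_left _ _)
  · apply hball₂
    rw [Metric.mem_ball, B0_dist]
    exact lt_of_lt_of_le hdist₂ (min_le_right _ _)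

end
end

section
/- Let U, W ∈ B(H) with W invertible and U unitary, and suppose there exist a nonzero finite-dimensional subspace K of H and N ∈ ℕ with U^n(K) ⊥ K for all n ≥ N. If the set of periodic elements of {T_{U,W}^n} is dense in B_0(H), then m(W) < 1. -/
set_option linter.unusedSectionVars false
set_option linter.unusedVariables false

open scoped InnerProductSpace
open Filter

noncomputable section

variable {H : Type*} [NormedAddCommGroup H] [InnerProductSpace ℂ H] [CompleteSpace H]

/-- Auxiliary: a unitary element of `B(H)` preserves inner products. -/
theorem inner_map_map_of_unitary (A : H →L[ℂ] H) (hA : A ∈ unitary (H →L[ℂ] H)) (x y : H) :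
    ⟪A x, A y⟫_ℂ = ⟪x, y⟫_ℂ := by
  have h1 : star A * A = 1 := hA.1
  have h2 : (ContinuousLinearMap.adjoint A) (A y) = y := by
    rw [← ContinuousLinearMap.star_eq_adjoint, ← ContinuousLinearMap.mul_apply, h1,
      ContinuousLinearMap.one_apply]
  rw [← ContinuousLinearMap.adjoint_inner_right, h2]

set_option maxHeartbeats 2000000 in
/-- if the periodic elements of `{T^n}` are dense in `B₀(H)`, then `m(W) < 1`. -/
theorem stmt13 (W : H ≃L[ℂ] H) (U : H →L[ℂ] H) (hU : U ∈ unitary (H →L[ℂ] H))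
    (K : Submodule ℂ H) (hK : FiniteDimensional ℂ K) (hKne : K ≠ ⊥) (N : ℕ)
    (horth : ∀ n ≥ N, ∀ x ∈ K, ∀ y ∈ K, ⟪(U ^ n) x, y⟫_ℂ = 0)
    (hdense : ∀ F : H →L[ℂ] H, IsCompactOperator F → ∀ ε > (0 : ℝ),
      ∃ G : H →L[ℂ] H, IsCompactOperator G ∧
        (∃ N' : ℕ, 0 < N' ∧ ∀ k : ℕ, Tpow W U (k * N') G = G) ∧ ‖F - G‖ < ε) :
    mop (W : H →L[ℂ] H) < 1 := by
  by_contra hcon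
  push_neg at hcon
  -- Step 1: `‖W v‖ ≥ ‖v‖` for all `v`, and similarly for all powers of `W`.
  have hbdd : BddBelow (Set.range fun x : {x : H // ‖x‖ = 1} => ‖(W : H →L[ℂ] H) x‖) := by
    refine ⟨0, ?_⟩
    rintro r ⟨x, rfl⟩
    exact norm_nonneg _
  have hW1 : ∀ v : H, ‖v‖ ≤ ‖(W : H →L[ℂ] H) v‖ := by
    intro v
    rcases eq_or_ne v 0 with rfl | hv
    · simp
    · have hx0 : ‖v‖ ≠ 0 := norm_ne_zero_iff.mpr hv
      have hu : ‖((‖v‖⁻¹ : ℂ) • v)‖ = 1 := by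
        rw [norm_smul]
        simp [abs_of_nonneg (inv_nonneg.mpr (norm_nonneg v)), inv_mul_cancel₀ hx0]
      have h1 : (1 : ℝ) ≤ ‖(W : H →L[ℂ] H) ((‖v‖⁻¹ : ℂ) • v)‖ :=
        le_trans hcon (ciInf_le hbdd ⟨_, hu⟩)
      rw [map_smul, norm_smul] at h1
      have h2 : ‖((‖v‖ : ℂ))⁻¹‖ = ‖v‖⁻¹ := by
        rw [norm_inv, Complex.norm_real, Real.norm_eq_abs, abs_of_nonneg (norm_nonneg v)]
      rw [h2] at h1
      have h3 : ‖v‖ * 1 ≤ ‖v‖ * (‖v‖⁻¹ * ‖(W : H →L[ℂ] H) v‖) :=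
        mul_le_mul_of_nonneg_left h1 (norm_nonneg v)
      rw [mul_one, ← mul_assoc, mul_inv_cancel₀ hx0, one_mul] at h3
      exact h3
  have hWn : ∀ (n : ℕ) (v : H), ‖v‖ ≤ ‖((W : H →L[ℂ] H) ^ n) v‖ := by
    intro n
    induction n with
    | zero => intro v; simp
    | succ n ih =>
        intro v
        have h1 : ((W : H →L[ℂ] H) ^ (n + 1)) v = (W : H →L[ℂ] H) (((W : H →L[ℂ] H) ^ n) v) := by
          rw [pow_succ']
          rfl
        rw [h1]
        exact le_trans (ih v) (hW1 _)
  -- Step 2: a unit vector `e ∈ K`.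
  obtain ⟨x, hxK, hx0⟩ := Submodule.ne_bot_iff K |>.mp hKne
  have hxn : ‖x‖ ≠ 0 := norm_ne_zero_iff.mpr hx0
  set e : H := (‖x‖⁻¹ : ℂ) • x with he_def
  have heK : e ∈ K := K.smul_mem _ hxK
  have hen : ‖e‖ = 1 := by
    rw [he_def, norm_smul]
    simp [abs_of_nonneg (inv_nonneg.mpr (norm_nonneg x)), inv_mul_cancel₀ hxn]
  have hee : ⟪e, e⟫_ℂ = 1 := by
    rw [inner_self_eq_norm_sq_to_K, hen]
    norm_num
  -- Step 3: the rank-one operator `F = ⟪e, ·⟫ e` is compact.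
  set F : H →L[ℂ] H := (innerSL ℂ e).smulRight e with hF_def
  have hFapp : ∀ y : H, F y = ⟪e, y⟫_ℂ • e := fun y => rfl
  have hFc : IsCompactOperator F := by
    refine ⟨(fun c : ℂ => c • e) '' Metric.closedBall 0 1,
      ((isCompact_closedBall 0 1).image (by continuity)), ?_⟩
    refine Filter.mem_of_superset (Metric.ball_mem_nhds 0 one_pos) ?_
    intro y hy
    refine ⟨⟪e, y⟫_ℂ, ?_, rfl⟩
    rw [Metric.mem_closedBall, dist_zero_right]
    calc ‖⟪e, y⟫_ℂ‖ ≤ ‖e‖ * ‖y‖ := norm_inner_le_norm e y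
      _ ≤ 1 := by
          rw [hen, one_mul]
          exact le_of_lt (by simpa using hy)
  -- Step 4: get a periodic compact `G` with `‖F - G‖ < 1/2`.
  obtain ⟨G, hGc, ⟨N', hN', hper⟩, hFG⟩ := hdense F hFc (1 / 2) (by norm_num)
  have hGe : (1 : ℝ) / 2 ≤ ‖G e‖ := by
    have h1 : ‖e - G e‖ ≤ ‖F - G‖ * ‖e‖ := by
      have : e - G e = (F - G) e := by rw [ContinuousLinearMap.sub_apply, hFapp, hee, one_smul]
      rw [this]
      exact ContinuousLinearMap.le_opNorm _ _
    have h2 := norm_sub_norm_le e (G e)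
    rw [hen] at h1 h2
    rw [mul_one] at h1
    linarith
  -- Step 5: the orthonormal sequence `z k = (U*)^{m k} e`.
  set c : ℕ := (N + 1) * N' with hc_def
  set m : ℕ → ℕ := fun k => (k + 1) * c with hm_def
  set V : H →L[ℂ] H := star U with hV_def
  have hVu : V ∈ unitary (H →L[ℂ] H) := Unitary.star_mem hU
  set z : ℕ → H := fun k => (V ^ m k) e with hz_def
  have hUVn : ∀ (n : ℕ) (v : H), (U ^ n) ((V ^ n) v) = v := by
    intro n v
    have h1 : U ^ n * V ^ n = 1 := by
      rw [hV_def, ← star_pow]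
      exact Unitary.mul_star_self_of_mem (pow_mem hU n)
    calc (U ^ n) ((V ^ n) v) = (U ^ n * V ^ n) v := rfl
      _ = v := by rw [h1]; rfl
  have hVd : ∀ d : ℕ, N ≤ d → ⟪e, (V ^ d) e⟫_ℂ = 0 := by
    intro d hd
    have h1 : (V ^ d : H →L[ℂ] H) = ContinuousLinearMap.adjoint (U ^ d) := by
      rw [hV_def, ← star_pow, ContinuousLinearMap.star_eq_adjoint]
    rw [h1, ContinuousLinearMap.adjoint_inner_right]
    exact horth d hd e heK e heK
  have hinner_zl : ∀ k l : ℕ, k < l → ⟪z k, z l⟫_ℂ = 0 := by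
    intro k l hkl
    have hml : m l = m k + (l - k) * c := by
      rw [hm_def]
      simp only
      rw [← add_mul]
      congr 1
      omega
    have hd : N ≤ (l - k) * c := by
      have h1 : 1 ≤ l - k := by omega
      have h2 : 1 ≤ N' := hN'
      calc N ≤ (N + 1) * N' := by nlinarith
        _ ≤ (l - k) * c := Nat.le_mul_of_pos_left _ (by omega)
    rw [hz_def]
    simp only
    rw [hml, pow_add, ContinuousLinearMap.mul_apply,
      inner_map_map_of_unitary (V ^ m k) (pow_mem hVu (m k))]
    exact hVd _ hd
  have hz_on : Orthonormal ℂ z := by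
    rw [orthonormal_iff_ite]
    intro k l
    rcases lt_trichotomy k l with h | h | h
    · rw [hinner_zl k l h, if_neg (ne_of_lt h)]
    · subst h
      rw [if_pos rfl, hz_def]
      simp only
      rw [inner_map_map_of_unitary (V ^ m k) (pow_mem hVu (m k)), hee]
    · rw [if_neg (ne_of_gt h), ← inner_conj_symm, hinner_zl l k h, map_zero]
  -- Step 6: `‖G (z k)‖ ≥ 1/2`.
  have hGz : ∀ k : ℕ, (1 : ℝ) / 2 ≤ ‖G (z k)‖ := by
    intro k
    have hper' : Tpow W U (m k) G = G := by
      have h := hper ((k + 1) * (N + 1))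
      rw [hm_def]
      simp only
      rw [hc_def, ← mul_assoc]
      exact h
    have h1 : ((W : H →L[ℂ] H) ^ m k) (G ((U ^ m k) (z k))) = G (z k) := by
      conv_rhs => rw [← hper']
      rfl
    rw [hz_def] at h1 ⊢
    simp only at h1 ⊢
    rw [hUVn (m k) e] at h1
    rw [← h1]
    exact le_trans hGe (hWn (m k) (G e))
  -- Step 7: compactness gives a convergent subsequence of `G (z k)`.
  obtain ⟨C, hCcomp, hCnhds⟩ := hGc
  obtain ⟨r, hr0, hrsub⟩ := Metric.mem_nhds_iff.mp hCnhds
  have hzC : ∀ k, G (((r / 2 : ℝ) : ℂ) • z k) ∈ C := by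
    intro k
    apply hrsub
    rw [Metric.mem_ball, dist_zero_right, norm_smul]
    have hzn : ‖z k‖ = 1 := hz_on.1 k
    rw [hzn, mul_one]
    rw [Complex.norm_real, Real.norm_eq_abs, abs_of_pos (by linarith : (0:ℝ) < r / 2)]
    linarith
  obtain ⟨v, _, φ, hφ, hconv⟩ :=
    IsCompact.tendsto_subseq hCcomp hzC
  have hGsmul : ∀ k, G (((r / 2 : ℝ) : ℂ) • z k) = ((r / 2 : ℝ) : ℂ) • G (z k) := fun k =>
    map_smul G _ _
  have hvnorm : r / 2 * (1 / 2) ≤ ‖v‖ := by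
    have hnormconv : Filter.Tendsto (fun j => ‖G (((r / 2 : ℝ) : ℂ) • z (φ j))‖) atTop (nhds ‖v‖) :=
      hconv.norm
    refine ge_of_tendsto hnormconv (Filter.Eventually.of_forall fun j => ?_)
    rw [hGsmul, norm_smul, Complex.norm_real, Real.norm_eq_abs,
      abs_of_pos (by linarith : (0:ℝ) < r / 2)]
    exact mul_le_mul_of_nonneg_left (hGz (φ j)) (by linarith)
  have hv0 : v ≠ 0 := by
    intro h
    rw [h, norm_zero] at hvnorm
    linarith
  -- Step 8: contradiction via Bessel's inequality.
  set a : H := (ContinuousLinearMap.adjoint G) v with ha_def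
  have hbessel : Summable fun k => ‖⟪z k, a⟫_ℂ‖ ^ 2 := Orthonormal.inner_products_summable a hz_on
  have htend0 : Filter.Tendsto (fun k => ⟪z k, a⟫_ℂ) atTop (nhds 0) := by
    have h1 : Filter.Tendsto (fun k => ‖⟪z k, a⟫_ℂ‖ ^ 2) atTop (nhds 0) :=
      hbessel.tendsto_atTop_zero
    have h2 : Filter.Tendsto (fun k => ‖⟪z k, a⟫_ℂ‖) atTop (nhds 0) := by
      have h3 := h1.sqrt
      rw [Real.sqrt_zero] at h3
      convert h3 using 2 with k
      rw [Real.sqrt_sq (norm_nonneg _)]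
    exact tendsto_zero_iff_norm_tendsto_zero.mpr h2
  have htend0' : Filter.Tendsto (fun k => ⟪a, z k⟫_ℂ) atTop (nhds 0) := by
    have h1 : Filter.Tendsto (fun k => (starRingEnd ℂ) ⟪z k, a⟫_ℂ) atTop (nhds ((starRingEnd ℂ) 0)) :=
      (Complex.continuous_conj.tendsto 0).comp htend0
    rw [map_zero] at h1
    have h2 : (fun k => ⟪a, z k⟫_ℂ) = fun k => (starRingEnd ℂ) ⟪z k, a⟫_ℂ := by
      funext k
      rw [← inner_conj_symm]
    rw [h2]
    exact h1
  have hinner_v : ∀ k, ⟪v, G (((r / 2 : ℝ) : ℂ) • z k)⟫_ℂ = ((r / 2 : ℝ) : ℂ) * ⟪a, z k⟫_ℂ := by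
    intro k
    rw [hGsmul, inner_smul_right, ha_def, ContinuousLinearMap.adjoint_inner_left]
  have hlim1 : Filter.Tendsto (fun j => ⟪v, G (((r / 2 : ℝ) : ℂ) • z (φ j))⟫_ℂ) atTop
      (nhds ⟪v, v⟫_ℂ) := tendsto_const_nhds.inner hconv
  have hlim2 : Filter.Tendsto (fun j => ⟪v, G (((r / 2 : ℝ) : ℂ) • z (φ j))⟫_ℂ) atTop (nhds 0) := by
    have h1 : Filter.Tendsto (fun j => ((r / 2 : ℝ) : ℂ) * ⟪a, z (φ j)⟫_ℂ) atTop
        (nhds (((r / 2 : ℝ) : ℂ) * 0)) :=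
      tendsto_const_nhds.mul (htend0'.comp hφ.tendsto_atTop)
    rw [mul_zero] at h1
    convert h1 using 2 with j
    exact hinner_v (φ j)
  have hvv : ⟪v, v⟫_ℂ = 0 := tendsto_nhds_unique hlim1 hlim2
  exact hv0 (inner_self_eq_zero.mp hvv)

end
end
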